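/- Let L/K be a finite Galois extension of local fields with K strictly contained in L and residue characteristic p. If p divides d_{L/K} + 1 (equivalently, p divides −d_{L/K} − 1), then VC(L/K) does not hold. -/

import Mathlib

/-- A local field structure on a field `K`: a normalized (surjective) discrete
valuation `v : K* ↠ ℤ`, extended by a junk value at `0`, with respect to which
`K` is complete. -/
structure LocalFieldStruct (K : Type) [Field K] where
  /-- the valuation; its value at `0` is irrelevant -/
  v : K → ℤ
  v_mul : ∀ x y : K, x ≠ 0 → y ≠ 0 → v (x * y) = v x + v y
  v_add : ∀ x y : K, x ≠ 0 → y ≠ 0 → x + y ≠ 0 → min (v x) (v y) ≤ v (x + y)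
  v_surj : ∀ n : ℤ, ∃ x : K, x ≠ 0 ∧ v x = n
  complete : ∀ a : ℕ → K,
      (∀ N : ℤ, ∃ M : ℕ, ∀ m : ℕ, M ≤ m → ∀ n : ℕ, M ≤ n →
        a m = a n ∨ N ≤ v (a m - a n)) →
      ∃ x : K, ∀ N : ℤ, ∃ M : ℕ, ∀ n : ℕ, M ≤ n → a n = x ∨ N ≤ v (a n - x)

namespace LocalFieldStruct

variable {K L : Type} [Field K] [Field L]

/-- `x` lies in the valuation ring `O_K`. -/
def Integral (w : LocalFieldStruct K) (x : K) : Prop :=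
  x = 0 ∨ 0 ≤ w.v x

/-- The residue characteristic of `K` is the prime `p`, i.e. `p` maps to `0`
in the residue field of the valuation ring. -/
def ResidueCharP (w : LocalFieldStruct K) (p : ℕ) : Prop :=
  p.Prime ∧ ((p : K) = 0 ∨ 0 < w.v (p : K))

/-- `K` has mixed characteristic `(0, p)`: `K` has characteristic `0` and its
residue field has characteristic `p > 0`. -/
def MixedChar (w : LocalFieldStruct K) (p : ℕ) : Prop :=
  CharZero K ∧ p.Prime ∧ 0 < w.v (p : K)

/-- `e` is the ramification index `e_{L/K}`: the valuation of `L` restricted to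
`K` is `e` times the valuation of `K`. -/
def IsRamificationIndex (wK : LocalFieldStruct K) (wL : LocalFieldStruct L)
    [Algebra K L] (e : ℕ) : Prop :=
  0 < e ∧ ∀ x : K, x ≠ 0 → wL.v (algebraMap K L x) = (e : ℤ) * wK.v x

/-- `d` is the valuation `d_{L/K}` of the different of `L/K`, characterized by
`Tr_{L/K}(𝔭_L^i) ⊆ O_K ↔ i ≥ -d` for all `i : ℤ`. -/
def IsDifferentVal (wK : LocalFieldStruct K) (wL : LocalFieldStruct L)
    [Algebra K L] (d : ℤ) : Prop :=
  ∀ i : ℤ,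
    (∀ x : L, (x ≠ 0 → i ≤ wL.v x) → wK.Integral (Algebra.trace K L x)) ↔ -d ≤ i

end LocalFieldStruct

/-- `x` is a normal basis generator of `L` over `K`: the Galois conjugates of
`x` form a `K`-basis of `L`. -/
def IsNormalElement (K : Type) [Field K] {L : Type} [Field L] [Algebra K L]
    (x : L) : Prop :=
  LinearIndependent K (fun σ : L ≃ₐ[K] L => σ x) ∧
    Submodule.span K (Set.range fun σ : L ≃ₐ[K] L => σ x) = ⊤

/-- The valuation criterion `VC(L/K)`, for an extension with ramification
index `e` and different of valuation `d`: every nonzero `x ∈ L` with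
`v_L(x) ≡ -d-1 (mod e)` is a normal basis generator of `L` over `K`. -/
def VC (K : Type) [Field K] {L : Type} [Field L] [Algebra K L]
    (wL : LocalFieldStruct L) (e : ℕ) (d : ℤ) : Prop :=
  ∀ x : L, x ≠ 0 → Int.ModEq (e : ℤ) (wL.v x) (-d - 1) → IsNormalElement K x

namespace LocalFieldStruct


variable {K : Type} [Field K]

theorem v_one (w : LocalFieldStruct K) : w.v 1 = 0 := by
  have h := w.v_mul 1 1 one_ne_zero one_ne_zero
  rw [mul_one] at h; omega

theorem v_neg (w : LocalFieldStruct K) {x : K} (hx : x ≠ 0) : w.v (-x) = w.v x := by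
  have h1 := w.v_mul (-1) (-1) (by norm_num) (by norm_num)
  rw [neg_mul_neg, one_mul, w.v_one] at h1
  have h2 := w.v_mul (-1) x (by norm_num) hx
  rw [neg_one_mul] at h2
  omega

theorem v_inv (w : LocalFieldStruct K) {x : K} (hx : x ≠ 0) : w.v x⁻¹ = -w.v x := by
  have h := w.v_mul x x⁻¹ hx (inv_ne_zero hx)
  rw [mul_inv_cancel₀ hx, w.v_one] at h
  omega

theorem v_div (w : LocalFieldStruct K) {x y : K} (hx : x ≠ 0) (hy : y ≠ 0) :
    w.v (x / y) = w.v x - w.v y := by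
  rw [div_eq_mul_inv, w.v_mul x y⁻¹ hx (inv_ne_zero hy), w.v_inv hy]
  omega

theorem v_pow (w : LocalFieldStruct K) {x : K} (hx : x ≠ 0) (m : ℕ) :
    w.v (x ^ m) = m * w.v x := by
  induction m with
  | zero => simpa using w.v_one
  | succ k ih =>
    rw [pow_succ, w.v_mul _ _ (pow_ne_zero k hx) hx, ih]
    push_cast; ring

theorem v_sub_eq_left (w : LocalFieldStruct K) {a b : K} (ha : a ≠ 0) (hb : b ≠ 0)
    (hab : w.v a < w.v b) : w.v (a - b) = w.v a := by
  have hne : a - b ≠ 0 := by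
    intro h
    rw [sub_eq_zero] at h
    subst h
    exact lt_irrefl _ hab
  have h1 : min (w.v a) (w.v (-b)) ≤ w.v (a + -b) :=
    w.v_add a (-b) ha (neg_ne_zero.mpr hb) (by rwa [← sub_eq_add_neg])
  rw [w.v_neg hb, ← sub_eq_add_neg] at h1
  have h2 : min (w.v (a - b)) (w.v b) ≤ w.v a := by
    have h3 : a - b + b = a := sub_add_cancel a b
    have := w.v_add (a - b) b hne hb (by rw [h3]; exact ha)
    rwa [h3] at this
  rcases le_or_gt (w.v (a - b)) (w.v a) with h | h
  · have := min_le_iff.mp h1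
    omega
  · have := min_le_iff.mp h2
    omega

theorem v_prod {ι : Type*} (w : LocalFieldStruct K) (s : Finset ι) (f : ι → K)
    (h : ∀ i ∈ s, f i ≠ 0) : w.v (∏ i ∈ s, f i) = ∑ i ∈ s, w.v (f i) := by
  classical
  induction s using Finset.cons_induction with
  | empty => simpa using w.v_one
  | cons a s ha ih =>
    rw [Finset.prod_cons, Finset.sum_cons,
      w.v_mul _ _ (h a (Finset.mem_cons_self a s))
        (Finset.prod_ne_zero_iff.mpr fun i hi => h i (Finset.mem_cons_of_mem hi)),
      ih fun i hi => h i (Finset.mem_cons_of_mem hi)]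

theorem v_sum {ι : Type*} (w : LocalFieldStruct K) (s : Finset ι) (f : ι → K) (c : ℤ)
    (h : ∀ i ∈ s, f i ≠ 0 → c ≤ w.v (f i)) :
    (∑ i ∈ s, f i) = 0 ∨ c ≤ w.v (∑ i ∈ s, f i) := by
  classical
  induction s using Finset.cons_induction with
  | empty => simp
  | cons a s ha ih =>
    rw [Finset.sum_cons]
    rcases ih (fun i hi hfi => h i (Finset.mem_cons_of_mem hi) hfi) with h0 | hs
    · rw [h0, add_zero]
      by_cases hfa : f a = 0
      · exact Or.inl hfa
      · exact Or.inr (h a (Finset.mem_cons_self a s) hfa)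
    · by_cases hfa : f a = 0
      · rw [hfa, zero_add]
        exact Or.inr hs
      · by_cases hS0 : (∑ i ∈ s, f i) = 0
        · rw [hS0, add_zero]
          exact Or.inr (h a (Finset.mem_cons_self a s) hfa)
        · by_cases hsum : f a + ∑ i ∈ s, f i = 0
          · exact Or.inl hsum
          · refine Or.inr (le_trans (le_min (h a (Finset.mem_cons_self a s) hfa) hs) ?_)
            exact w.v_add _ _ hfa hS0 hsum

theorem v_natCast_nonneg (w : LocalFieldStruct K) :
    ∀ m : ℕ, (m : K) ≠ 0 → 0 ≤ w.v (m : K) := by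
  intro m
  induction m with
  | zero => intro h; simp at h
  | succ k ih =>
    intro h
    push_cast at h ⊢
    by_cases hk : (k : K) = 0
    · rw [hk, zero_add]
      rw [w.v_one]
    · have hmin := w.v_add (k : K) 1 hk one_ne_zero h
      rw [w.v_one] at hmin
      have := ih hk
      omega

theorem v_intCast_nonneg (w : LocalFieldStruct K) (k : ℤ) (hk : (k : K) ≠ 0) :
    0 ≤ w.v (k : K) := by
  rcases Int.natAbs_eq k with h | h
  · rw [h] at hk ⊢
    rw [Int.cast_natCast] at hk ⊢
    exact w.v_natCast_nonneg _ hk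
  · rw [h] at hk ⊢
    rw [Int.cast_neg, Int.cast_natCast] at hk ⊢
    rw [w.v_neg (by simpa using hk)]
    exact w.v_natCast_nonneg _ (by simpa using hk)

/-! ### A real-valued norm -/

open Classical in
noncomputable def anorm (w : LocalFieldStruct K) (x : K) : ℝ :=
  if x = 0 then 0 else (2 : ℝ) ^ (-w.v x)

theorem anorm_zero (w : LocalFieldStruct K) : w.anorm 0 = 0 := by simp [anorm]

theorem anorm_of_ne_zero (w : LocalFieldStruct K) {x : K} (hx : x ≠ 0) :
    w.anorm x = (2 : ℝ) ^ (-w.v x) := by simp [anorm, hx]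

theorem anorm_nonneg (w : LocalFieldStruct K) (x : K) : 0 ≤ w.anorm x := by
  by_cases hx : x = 0
  · rw [hx, anorm_zero]
  · rw [w.anorm_of_ne_zero hx]
    positivity

theorem anorm_pos (w : LocalFieldStruct K) {x : K} (hx : x ≠ 0) : 0 < w.anorm x := by
  rw [w.anorm_of_ne_zero hx]
  positivity

theorem anorm_eq_zero_iff (w : LocalFieldStruct K) {x : K} : w.anorm x = 0 ↔ x = 0 := by
  constructor
  · intro h
    by_contra hx
    exact (w.anorm_pos hx).ne' h
  · intro h; rw [h, anorm_zero]

theorem anorm_mul (w : LocalFieldStruct K) (x y : K) :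
    w.anorm (x * y) = w.anorm x * w.anorm y := by
  by_cases hx : x = 0
  · simp [hx, w.anorm_zero]
  by_cases hy : y = 0
  · simp [hy, w.anorm_zero]
  rw [w.anorm_of_ne_zero hx, w.anorm_of_ne_zero hy,
    w.anorm_of_ne_zero (mul_ne_zero hx hy), w.v_mul x y hx hy, neg_add,
    zpow_add₀ (by norm_num : (2:ℝ) ≠ 0)]

theorem anorm_neg (w : LocalFieldStruct K) (x : K) : w.anorm (-x) = w.anorm x := by
  by_cases hx : x = 0
  · rw [hx, neg_zero]
  · rw [w.anorm_of_ne_zero (neg_ne_zero.mpr hx), w.anorm_of_ne_zero hx, w.v_neg hx]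

theorem anorm_add_le_max (w : LocalFieldStruct K) (x y : K) :
    w.anorm (x + y) ≤ max (w.anorm x) (w.anorm y) := by
  by_cases hxy : x + y = 0
  · rw [hxy, anorm_zero]
    exact le_max_of_le_left (w.anorm_nonneg x)
  by_cases hx : x = 0
  · rw [hx, zero_add] at hxy ⊢
    exact le_max_right _ _
  by_cases hy : y = 0
  · rw [hy, add_zero] at hxy ⊢
    exact le_max_left _ _
  have hmin := w.v_add x y hx hy hxy
  rw [w.anorm_of_ne_zero hxy, w.anorm_of_ne_zero hx, w.anorm_of_ne_zero hy]
  rcases le_total (w.v x) (w.v y) with h | h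
  · refine le_max_of_le_left (zpow_le_zpow_right₀ one_le_two ?_)
    omega
  · refine le_max_of_le_right (zpow_le_zpow_right₀ one_le_two ?_)
    omega

theorem anorm_add_le (w : LocalFieldStruct K) (x y : K) :
    w.anorm (x + y) ≤ w.anorm x + w.anorm y :=
  le_trans (w.anorm_add_le_max x y)
    (max_le (le_add_of_nonneg_right (w.anorm_nonneg y))
      (le_add_of_nonneg_left (w.anorm_nonneg x)))

@[reducible] noncomputable def toNormedField (w : LocalFieldStruct K) : NormedField K where
  toField := ‹Field K›
  norm x := w.anorm x
  dist x y := w.anorm (x - y)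
  dist_self x := by
    show w.anorm (x - x) = 0
    simp [w.anorm_zero]
  dist_comm x y := by
    show w.anorm (x - y) = w.anorm (y - x)
    have : y - x = -(x - y) := by ring
    rw [this, w.anorm_neg]
  dist_triangle x y z := by
    show w.anorm (x - z) ≤ w.anorm (x - y) + w.anorm (y - z)
    have : x - z = (x - y) + (y - z) := by ring
    rw [this]
    exact w.anorm_add_le _ _
  eq_of_dist_eq_zero := fun h => sub_eq_zero.mp (w.anorm_eq_zero_iff.mp h)
  dist_eq x y := by
    show w.anorm (x - y) = w.anorm (-x + y)
    rw [show -x + y = -(x - y) by ring, w.anorm_neg]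
  norm_mul := w.anorm_mul

end LocalFieldStruct

namespace LocalFieldStruct

theorem two_zpow_le_iff {a b : ℤ} : (2:ℝ) ^ a ≤ 2 ^ b ↔ a ≤ b :=
  zpow_le_zpow_iff_right₀ one_lt_two

theorem two_zpow_lt_iff {a b : ℤ} : (2:ℝ) ^ a < 2 ^ b ↔ a < b :=
  zpow_lt_zpow_iff_right₀ one_lt_two

theorem two_zpow_neg_nat (n : ℕ) : (2:ℝ) ^ (-(n:ℤ)) = (1/2 : ℝ) ^ n := by
  rw [zpow_neg, zpow_natCast, one_div, inv_pow]

variable {K L : Type} [Field K] [Field L]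

theorem v_aut_eq [Algebra K L] [FiniteDimensional K L]
    (wK : LocalFieldStruct K) (wL : LocalFieldStruct L) {e : ℕ}
    (he : wK.IsRamificationIndex wL e) :
    ∀ (σ : L ≃ₐ[K] L) (x : L), x ≠ 0 → wL.v (σ x) = wL.v x := by
  have he1 : 0 < e := he.1
  have heL := he.2
  suffices key : ∀ (σ : L ≃ₐ[K] L) (x : L), x ≠ 0 → wL.v x ≤ wL.v (σ x) by
    intro σ x hx
    have hσx : σ x ≠ 0 := fun h => hx (by simpa using congrArg σ.symm h)
    have h1 := key σ x hx
    have h2 := key σ.symm (σ x) hσx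
    rw [σ.symm_apply_apply x] at h2
    omega
  -- set up the topological structure
  letI nK : NormedField K := wK.toNormedField
  letI : NontriviallyNormedField K :=
    { nK with
      non_trivial := by
        obtain ⟨c, hc0, hc⟩ := wK.v_surj (-1)
        refine ⟨c, ?_⟩
        show (1:ℝ) < wK.anorm c
        rw [wK.anorm_of_ne_zero hc0, hc, neg_neg, zpow_one]
        norm_num }
  have hdistK : ∀ a b : K, dist a b = wK.anorm (a - b) := fun _ _ => rfl
  letI : CompleteSpace K := by
    apply Metric.complete_of_cauchySeq_tendsto
    intro u hu
    have hcau : ∀ N : ℤ, ∃ M : ℕ, ∀ m : ℕ, M ≤ m → ∀ n : ℕ, M ≤ n →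
        u m = u n ∨ N ≤ wK.v (u m - u n) := by
      intro N
      obtain ⟨M, hM⟩ := (Metric.cauchySeq_iff.mp hu) ((2:ℝ) ^ (-N)) (by positivity)
      refine ⟨M, fun m hm n hn => ?_⟩
      by_cases hmn : u m = u n
      · exact Or.inl hmn
      · right
        have hne : u m - u n ≠ 0 := sub_ne_zero.mpr hmn
        have hlt := hM m hm n hn
        rw [hdistK, wK.anorm_of_ne_zero hne] at hlt
        have := two_zpow_lt_iff.mp hlt
        omega
    obtain ⟨x, hx⟩ := wK.complete u hcau
    refine ⟨x, Metric.tendsto_atTop.mpr fun ε hε => ?_⟩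
    obtain ⟨n₀, hn₀⟩ := exists_pow_lt_of_lt_one hε (by norm_num : (1:ℝ)/2 < 1)
    obtain ⟨M, hM⟩ := hx (n₀ : ℤ)
    refine ⟨M, fun n hn => ?_⟩
    rcases hM n hn with h | h
    · rw [h]
      simpa [dist_self] using hε
    · rw [hdistK]
      by_cases h0 : u n - x = 0
      · rw [h0, wK.anorm_zero]; exact hε
      · rw [wK.anorm_of_ne_zero h0]
        calc (2:ℝ) ^ (-wK.v (u n - x)) ≤ 2 ^ (-(n₀:ℤ)) := two_zpow_le_iff.mpr (by omega)
          _ = (1/2:ℝ) ^ n₀ := two_zpow_neg_nat n₀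
          _ < ε := hn₀
  letI nL : NormedField L := wL.toNormedField
  have hdistL : ∀ a b : L, dist a b = wL.anorm (a - b) := fun _ _ => rfl
  have halginj : Function.Injective (algebraMap K L) := (algebraMap K L).injective
  haveI : ContinuousSMul K L := by
    have halg : Continuous (algebraMap K L) := by
      rw [Metric.continuous_iff]
      intro b ε hε
      refine ⟨min 1 ε, lt_min one_pos hε, fun a hab => ?_⟩
      by_cases hab0 : a = b
      · subst hab0
        simpa [dist_self] using hε
      · have hsub : a - b ≠ 0 := sub_ne_zero.mpr hab0
        have h1 : dist a b = (2:ℝ) ^ (-wK.v (a - b)) := by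
          rw [hdistK, wK.anorm_of_ne_zero hsub]
        have hv1 : 1 ≤ wK.v (a - b) := by
          have hlt1 : dist a b < 1 := lt_of_lt_of_le hab (min_le_left _ _)
          rw [h1] at hlt1
          have : (2:ℝ) ^ (-wK.v (a - b)) < 2 ^ (0:ℤ) := by simpa using hlt1
          have := two_zpow_lt_iff.mp this
          omega
        have hsubL : algebraMap K L a - algebraMap K L b ≠ 0 := by
          rw [← map_sub]
          exact fun h => hsub (halginj (by simpa using h))
        have h2 : dist (algebraMap K L a) (algebraMap K L b)
            = (2:ℝ) ^ (-((e:ℤ) * wK.v (a - b))) := by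
          rw [hdistL, ← map_sub, wL.anorm_of_ne_zero (by rw [map_sub]; exact hsubL),
            heL _ hsub]
        rw [h2]
        calc (2:ℝ) ^ (-((e:ℤ) * wK.v (a - b))) ≤ 2 ^ (-wK.v (a - b)) := by
              rw [two_zpow_le_iff]
              have : (1:ℤ) * wK.v (a-b) ≤ (e:ℤ) * wK.v (a - b) :=
                mul_le_mul_of_nonneg_right (by exact_mod_cast he1) (by omega)
              omega
          _ = dist a b := h1.symm
          _ < min 1 ε := hab
          _ ≤ ε := min_le_right _ _
    constructor
    have hfun : (fun p : K × L => p.1 • p.2) = fun p : K × L => (algebraMap K L p.1) * p.2 := by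
      funext p
      exact Algebra.smul_def _ _
    rw [hfun]
    exact (halg.comp continuous_fst).mul continuous_snd
  intro σ x hx
  have hσne : ∀ z : L, z ≠ 0 → σ z ≠ 0 := fun z hz h => hz (by simpa using congrArg σ.symm h)
  have hcont : Continuous (σ.toLinearMap : L →ₗ[K] L) :=
    LinearMap.continuous_of_finiteDimensional _
  obtain ⟨δ, hδpos, hδ⟩ := Metric.continuousAt_iff.mp (hcont.continuousAt (x := 0)) 1 one_pos
  obtain ⟨n₀, hn₀⟩ := exists_pow_lt_of_lt_one hδpos (by norm_num : (1:ℝ)/2 < 1)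
  set C : ℤ := (n₀ : ℤ) with hC
  have hstar : ∀ z : L, z ≠ 0 → C ≤ wL.v z → 0 ≤ wL.v (σ z) := by
    intro z hz hCz
    have hdz : dist z 0 < δ := by
      rw [hdistL, sub_zero, wL.anorm_of_ne_zero hz]
      calc (2:ℝ) ^ (-wL.v z) ≤ 2 ^ (-C) := two_zpow_le_iff.mpr (by omega)
        _ = (1/2:ℝ) ^ n₀ := two_zpow_neg_nat n₀
        _ < δ := hn₀
    have h1 := hδ hdz
    rw [map_zero, dist_zero_right] at h1
    have h1' : wL.anorm (σ z) < 1 := by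
      simp at h1; exact h1
    rw [wL.anorm_of_ne_zero (hσne z hz)] at h1'
    have : (2:ℝ) ^ (-wL.v (σ z)) < 2 ^ (0:ℤ) := by simpa using h1'
    have := two_zpow_lt_iff.mp this
    omega
  have hDD : ∀ z : L, z ≠ 0 → wL.v z - (C + e) ≤ wL.v (σ z) := by
    intro z hz
    set b : ℤ := wL.v z - C with hb
    set q : ℤ := b / e with hq
    set r : ℤ := b % e with hr
    have h1 : r + e * q = b := Int.emod_add_mul_ediv b e
    have hr0 : 0 ≤ r := Int.emod_nonneg b (by exact_mod_cast he1.ne')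
    have hrlt : r < e := Int.emod_lt_of_pos b (by exact_mod_cast he1)
    obtain ⟨c, hc0, hct⟩ := wK.v_surj (-q)
    have halgc : algebraMap K L c ≠ 0 := fun h => hc0 (halginj (by simpa using h))
    have hcz : algebraMap K L c * z ≠ 0 := mul_ne_zero halgc hz
    have hvcz : wL.v (algebraMap K L c * z) = (e:ℤ) * (-q) + wL.v z := by
      rw [wL.v_mul _ _ halgc hz, heL c hc0, hct]
    have h0 : 0 ≤ wL.v (σ (algebraMap K L c * z)) := by
      apply hstar _ hcz
      rw [hvcz]
      -- e * (-q) + v z = v z - e*q = v z - (b - r) = C + r ≥ C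
      have hq2 : (e:ℤ) * q = b - r := by omega
      have hq3 : (e:ℤ) * (-q) = r - b := by rw [mul_neg, hq2]; ring
      omega
    have hσeq : σ (algebraMap K L c * z) = algebraMap K L c * σ z := by
      rw [map_mul, AlgEquiv.commutes]
    rw [hσeq, wL.v_mul _ _ halgc (hσne z hz), heL c hc0, hct] at h0
    have : (e:ℤ) * q = b - r := by omega
    -- h0 : 0 ≤ e * (-q) + v (σ z), e*(-q) = r - b
    have he2 : (e:ℤ) * (-q) = r - b := by
      rw [mul_neg, this]; ring
    omega
  by_contra hlt
  push_neg at hlt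
  set D : ℤ := C + e with hD
  set m : ℕ := (max D 0).toNat + 1 with hm
  have hm1 : 1 ≤ m := Nat.le_add_left 1 _
  have hmD : D < (m : ℤ) := by
    have : ((max D 0).toNat : ℤ) = max D 0 := Int.toNat_of_nonneg (le_max_right _ _)
    push_cast [hm]
    omega
  have hxm : x ^ m ≠ 0 := pow_ne_zero m hx
  have hkey := hDD (x ^ m) hxm
  rw [map_pow, wL.v_pow hx m, wL.v_pow (hσne x hx) m] at hkey
  have hstep : (m:ℤ) * wL.v (σ x) ≤ (m:ℤ) * (wL.v x - 1) :=
    mul_le_mul_of_nonneg_left (by omega) (by positivity)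
  nlinarith [hkey, hstep, hmD]

end LocalFieldStruct


section Helpers

variable {K L : Type} [Field K] [Field L] [Algebra K L]

theorem not_normal_of_fixed {σ : L ≃ₐ[K] L} (hσ : σ ≠ 1) {x : L} (hfix : σ x = x) :
    ¬ IsNormalElement K x := by
  rintro ⟨hli, -⟩
  exact hσ (hli.injective (show σ x = (1 : L ≃ₐ[K] L) x by simpa using hfix))

theorem not_normal_of_trace_eq_zero [FiniteDimensional K L] [IsGalois K L] {x : L}
    (h : Algebra.trace K L x = 0) : ¬ IsNormalElement K x := by
  rintro ⟨hli, -⟩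
  have hsum : ∑ σ : L ≃ₐ[K] L, σ x = 0 := by
    rw [← trace_eq_sum_automorphisms, h, map_zero]
  have := Fintype.linearIndependent_iff.mp hli (fun _ => 1) (by simpa using hsum) 1
  exact one_ne_zero this

end Helpers

open LocalFieldStruct in
/-- Let `L/K` be a finite Galois extension of local fields with `K ⊊ L` and
residue characteristic `p`.  If `p ∣ d_{L/K} + 1`, then `VC(L/K)` does not
hold. -/
theorem statement16 {K L : Type} [Field K] [Field L] [Algebra K L]
    [FiniteDimensional K L] [IsGalois K L]
    (wK : LocalFieldStruct K) (wL : LocalFieldStruct L)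
    (p : ℕ) (hp : wK.ResidueCharP p)
    (hproper : 1 < Module.finrank K L)
    (e : ℕ) (he : IsRamificationIndex wK wL e)
    (d : ℤ) (hd : IsDifferentVal wK wL d)
    (hdvd : (p : ℤ) ∣ d + 1) :
    ¬ VC K wL e d := by
  intro hVC
  have he1 : 0 < e := he.1
  have heL := he.2
  have hinv := v_aut_eq wK wL he
  have hcard : Fintype.card (L ≃ₐ[K] L) = Module.finrank K L := by rw [← Nat.card_eq_fintype_card]; exact IsGalois.card_aut_eq_finrank K L
  obtain ⟨σ₀, hσ₀⟩ := Fintype.exists_ne_of_one_lt_card (by rw [hcard]; exact hproper) (1 : L ≃ₐ[K] L)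
  have halginj : Function.Injective (algebraMap K L) := (algebraMap K L).injective
  -- extract x₀ with v_L x₀ = -d-1 and v_K (Tr x₀) = -1
  have hInt : ∀ x : L, (x ≠ 0 → -d ≤ wL.v x) → wK.Integral (Algebra.trace K L x) :=
    (hd (-d)).mpr le_rfl
  have hdm1 : ¬ (∀ x : L, (x ≠ 0 → -d - 1 ≤ wL.v x) → wK.Integral (Algebra.trace K L x)) := by
    intro h
    have := (hd (-d - 1)).mp h
    omega
  push_neg at hdm1
  obtain ⟨x₀, hx₀v, hx₀tr⟩ := hdm1
  rw [Integral] at hx₀tr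
  push_neg at hx₀tr
  obtain ⟨ht0, ht0v⟩ := hx₀tr
  have hx00 : x₀ ≠ 0 := by
    rintro rfl
    exact ht0 (map_zero _)
  have hvx₀ : wL.v x₀ = -d - 1 := by
    have h1 := hx₀v hx00
    by_contra h
    have h2 : -d ≤ wL.v x₀ := by omega
    rcases hInt x₀ (fun _ => h2) with h' | h'
    · exact ht0 h'
    · omega
  -- v_K (trace x₀) = -1
  have key1 : wK.v (Algebra.trace K L x₀) = -1 := by
    obtain ⟨c₁, hc₁0, hc₁⟩ := wK.v_surj 1
    have halgc : algebraMap K L c₁ ≠ 0 := fun h => hc₁0 (halginj (by simpa using h))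
    have hmul : algebraMap K L c₁ * x₀ ≠ 0 := mul_ne_zero halgc hx00
    have hv : wL.v (algebraMap K L c₁ * x₀) = (e : ℤ) + (-d - 1) := by
      rw [wL.v_mul _ _ halgc hx00, heL c₁ hc₁0, hc₁, hvx₀, mul_one]
    have hInt2 := hInt (algebraMap K L c₁ * x₀)
      (fun _ => by rw [hv]; omega)
    rw [← Algebra.smul_def, map_smul, smul_eq_mul] at hInt2
    rcases hInt2 with h | h
    · exact absurd h (mul_ne_zero hc₁0 ht0)
    · rw [wK.v_mul _ _ hc₁0 ht0, hc₁] at h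
      omega
  -- d + 1 ≥ e
  have hde : (e : ℤ) ≤ d + 1 := by
    have hLHS : ∀ x : L, (x ≠ 0 → 1 - e ≤ wL.v x) → wK.Integral (Algebra.trace K L x) := by
      intro x hxv
      by_cases hx : x = 0
      · left; rw [hx, map_zero]
      by_cases htr : Algebra.trace K L x = 0
      · left; exact htr
      right
      have hsum := wL.v_sum Finset.univ (fun σ : L ≃ₐ[K] L => σ x) (1 - e)
        (fun σ _ _ => by rw [hinv σ x hx]; exact hxv hx)
      rw [← trace_eq_sum_automorphisms] at hsum
      have halgtr : algebraMap K L (Algebra.trace K L x) ≠ 0 :=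
        fun h => htr (halginj (by simpa using h))
      rcases hsum with h | h
      · exact absurd h halgtr
      · rw [heL _ htr] at h
        by_contra hneg
        push_neg at hneg
        have h1 : wK.v (Algebra.trace K L x) ≤ -1 := by omega
        have h2 : (e:ℤ) * wK.v (Algebra.trace K L x) ≤ (e:ℤ) * (-1) :=
          mul_le_mul_of_nonneg_left h1 (by positivity)
        omega
    have := (hd (1 - e)).mp hLHS
    omega
  -- main case split
  by_cases hpn : p ∣ Fintype.card (L ≃ₐ[K] L)
  · -- p divides the order of the Galois group : norm certificate
    haveI : Fact p.Prime := ⟨hp.1⟩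
    obtain ⟨σ, hσord⟩ := exists_prime_orderOf_dvd_card p hpn
    have hσ1 : σ ≠ 1 := by
      intro h
      rw [h, orderOf_one] at hσord
      exact hp.1.one_lt.ne' hσord.symm
    obtain ⟨α, hα⟩ := hdvd
    obtain ⟨y, hy0, hyv⟩ := wL.v_surj (-α)
    set x : L := ∏ i ∈ Finset.range p, (σ ^ i) y with hxdef
    have hterm : ∀ i : ℕ, (σ ^ i) y ≠ 0 := fun i h => hy0 (by have := congrArg (σ ^ i).symm h; rwa [AlgEquiv.symm_apply_apply, map_zero] at this)
    have hx0 : x ≠ 0 := Finset.prod_ne_zero_iff.mpr fun i _ => hterm i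
    have hvx : wL.v x = -d - 1 := by
      rw [hxdef, wL.v_prod _ _ fun i _ => hterm i]
      rw [Finset.sum_congr rfl (fun i _ => by rw [hinv (σ ^ i) y hy0, hyv]),
        Finset.sum_const, Finset.card_range, nsmul_eq_mul]
      have h' : (p:ℤ) * -α = -((p:ℤ) * α) := by ring
      omega
    have hfix : σ x = x := by
      have hcomp : ∀ i : ℕ, σ ((σ ^ i) y) = (σ ^ (i + 1)) y := by
        intro i
        rw [pow_succ']
        rfl
      have hmap : σ x = ∏ i ∈ Finset.range p, (σ ^ (i + 1)) y := by
        rw [hxdef, map_prod]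
        exact Finset.prod_congr rfl fun i _ => hcomp i
      have hgp : (σ ^ p) y = (σ ^ 0) y := by
        rw [← hσord, pow_orderOf_eq_one σ, pow_zero]
      have h1 : ∏ i ∈ Finset.range (p + 1), (σ ^ i) y
          = (∏ i ∈ Finset.range p, (σ ^ (i + 1)) y) * (σ ^ 0) y :=
        Finset.prod_range_succ' (fun i => (σ ^ i) y) p
      have h2 : ∏ i ∈ Finset.range (p + 1), (σ ^ i) y
          = (∏ i ∈ Finset.range p, (σ ^ i) y) * (σ ^ 0) y := by
        rw [Finset.prod_range_succ, hgp]
      have h3 := h1.symm.trans h2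
      have h0 : (σ ^ 0) y ≠ 0 := hterm 0
      rw [hmap, hxdef]
      exact mul_right_cancel₀ h0 h3
    have hmod : Int.ModEq (e : ℤ) (wL.v x) (-d - 1) := by
      rw [hvx]
    exact not_normal_of_fixed hσ1 hfix (hVC x hx0 hmod)
  · -- p does not divide n
    have hpn' : ¬ p ∣ Module.finrank K L := by rwa [hcard] at hpn
    set n : ℕ := Module.finrank K L with hn
    -- (n : K) ≠ 0 and v_K n = 0
    have hcop : IsCoprime (p : ℤ) (n : ℤ) :=
      Nat.isCoprime_iff_coprime.mpr ((Nat.Prime.coprime_iff_not_dvd hp.1).mpr hpn')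
    obtain ⟨u, w', hbez⟩ := hcop
    have hbezK : (u : K) * (p : K) + (w' : K) * (n : K) = 1 := by
      have := congrArg (fun z : ℤ => (z : K)) hbez
      push_cast at this
      simpa using this
    have hnK : (n : K) ≠ 0 ∧ wK.v ((n : K)) = 0 := by
      by_cases hpK : (p : K) = 0
      · rw [hpK, mul_zero, zero_add] at hbezK
        have hw0 : (w' : K) ≠ 0 := fun h => by rw [h, zero_mul] at hbezK; exact one_ne_zero hbezK.symm
        have hn0 : (n : K) ≠ 0 := fun h => by rw [h, mul_zero] at hbezK; exact one_ne_zero hbezK.symm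
        refine ⟨hn0, ?_⟩
        have := wK.v_mul _ _ hw0 hn0
        rw [hbezK, wK.v_one] at this
        have h1 := wK.v_intCast_nonneg w' hw0
        have h2 := wK.v_natCast_nonneg n hn0
        omega
      · have hpv : 0 < wK.v (p : K) := hp.2.resolve_left hpK
        have hn0 : (n : K) ≠ 0 := by
          intro h
          rw [h, mul_zero, add_zero] at hbezK
          have hu0 : (u : K) ≠ 0 := fun h' => by rw [h', zero_mul] at hbezK; exact one_ne_zero hbezK.symm
          have := wK.v_mul _ _ hu0 hpK
          rw [hbezK, wK.v_one] at this
          have h1 := wK.v_intCast_nonneg u hu0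
          omega
        refine ⟨hn0, ?_⟩
        have h2 := wK.v_natCast_nonneg n hn0
        by_cases hu0 : (u : K) = 0
        · rw [hu0, zero_mul, zero_add] at hbezK
          have hw0 : (w' : K) ≠ 0 := fun h => by rw [h, zero_mul] at hbezK; exact one_ne_zero hbezK.symm
          have := wK.v_mul _ _ hw0 hn0
          rw [hbezK, wK.v_one] at this
          have h1 := wK.v_intCast_nonneg w' hw0
          omega
        · by_cases hw0 : (w' : K) = 0
          · rw [hw0, zero_mul, add_zero] at hbezK
            have := wK.v_mul _ _ hu0 hpK
            rw [hbezK, wK.v_one] at this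
            have h1 := wK.v_intCast_nonneg u hu0
            omega
          · have hA : (u : K) * (p : K) ≠ 0 := mul_ne_zero hu0 hpK
            have hB : (w' : K) * (n : K) ≠ 0 := mul_ne_zero hw0 hn0
            have hAB : (u : K) * (p : K) + (w' : K) * (n : K) ≠ 0 := by
              rw [hbezK]; exact one_ne_zero
            have hmin := wK.v_add _ _ hA hB hAB
            rw [hbezK, wK.v_one, wK.v_mul _ _ hu0 hpK, wK.v_mul _ _ hw0 hn0] at hmin
            have h3 := wK.v_intCast_nonneg u hu0
            have h4 := wK.v_intCast_nonneg w' hw0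
            omega
    obtain ⟨hn0, hvn⟩ := hnK
    by_cases hed : (e : ℤ) ∣ d + 1
    · -- x = 1 works
      have hmod : Int.ModEq (e : ℤ) (wL.v 1) (-d - 1) := by
        rw [wL.v_one]
        refine Int.modEq_iff_dvd.mpr ?_
        rw [show -d - 1 - 0 = -(d + 1) by ring]
        exact dvd_neg.mpr hed
      exact not_normal_of_fixed hσ₀ (map_one σ₀) (hVC 1 one_ne_zero hmod)
    · -- trace-zero element
      have hlt : (e : ℤ) < d + 1 := lt_of_le_of_ne hde fun h => hed (h ▸ dvd_refl _)
      set t₀ := Algebra.trace K L x₀ with ht₀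
      set c : K := t₀ / (n : K) with hc
      have hc0 : c ≠ 0 := div_ne_zero ht0 hn0
      have hvc : wK.v c = -1 := by
        rw [hc, wK.v_div ht0 hn0, key1, hvn]
        omega
      have halgc : algebraMap K L c ≠ 0 := fun h => hc0 (halginj (by simpa using h))
      have hvac : wL.v (algebraMap K L c) = -(e : ℤ) := by
        rw [heL c hc0, hvc]
        ring
      set y : L := x₀ - algebraMap K L c with hy
      have hvy : wL.v y = -d - 1 := by
        rw [hy, wL.v_sub_eq_left hx00 halgc (by rw [hvx₀, hvac]; omega), hvx₀]
      have hy0 : y ≠ 0 := by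
        intro h
        rw [hy, sub_eq_zero] at h
        rw [h, hvac] at hvx₀
        omega
      have htry : Algebra.trace K L y = 0 := by
        rw [hy, map_sub, Algebra.trace_algebraMap, ← hn, nsmul_eq_mul, hc,
          mul_div_cancel₀ t₀ hn0]
        exact sub_self t₀
      have hmod : Int.ModEq (e : ℤ) (wL.v y) (-d - 1) := by rw [hvy]
      exact not_normal_of_trace_eq_zero htry (hVC y hy0 hmod)
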